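/- Let f ∈ ℂ[z] be a polynomial of degree d > 1. Then there is a constant C > 0 such that for every n ≥ 1 and every z ∈ ℂ, log max{1, |(f^n)'(z)|} ≤ (d^n−1)·g_f(z) + C·n. -/

import Mathlib

open Polynomial MeasureTheory Filter

/-- The `n`-th iterate of a polynomial `f` (as a polynomial). -/
noncomputable def polyIter (f : Polynomial ℂ) : ℕ → Polynomial ℂ
  | 0 => Polynomial.X
  | n + 1 => f.comp (polyIter f n)

namespace Stmt5Aux

/-- `log⁺` of a real number. -/
noncomputable def lp (x : ℝ) : ℝ := Real.log (max 1 x)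

lemma lp_def (x : ℝ) : lp x = Real.log (max 1 x) := rfl

lemma lp_nonneg (x : ℝ) : 0 ≤ lp x := Real.log_nonneg (le_max_left _ _)

lemma lp_mono {x y : ℝ} (h : x ≤ y) : lp x ≤ lp y :=
  Real.log_le_log (lt_of_lt_of_le one_pos (le_max_left _ _)) (max_le_max le_rfl h)

lemma lp_mul {x y : ℝ} (hx : 0 ≤ x) (hy : 0 ≤ y) : lp (x * y) ≤ lp x + lp y := by
  have h1 : (0:ℝ) < max 1 x := lt_of_lt_of_le one_pos (le_max_left _ _)
  have h2 : (0:ℝ) < max 1 y := lt_of_lt_of_le one_pos (le_max_left _ _)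
  have hle : max 1 (x * y) ≤ max 1 x * max 1 y := by
    apply max_le
    · nlinarith [le_max_left 1 x, le_max_left 1 y]
    · exact mul_le_mul (le_max_right _ _) (le_max_right _ _) hy (le_of_lt h1)
  calc lp (x * y) ≤ Real.log (max 1 x * max 1 y) :=
        Real.log_le_log (lt_of_lt_of_le one_pos (le_max_left _ _)) hle
    _ = lp x + lp y := Real.log_mul (ne_of_gt h1) (ne_of_gt h2)

lemma lp_abs_mul (a b : ℂ) :
    lp (‖a * b‖) ≤ lp (‖a‖) + lp (‖b‖) := by
  rw [norm_mul]
  exact lp_mul (norm_nonneg a) (norm_nonneg b)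

lemma lp_pow_max (w : ℂ) (k : ℕ) :
    lp ((max 1 (‖w‖)) ^ k) = k * lp (‖w‖) := by
  have h1 : (1:ℝ) ≤ max 1 (‖w‖) := le_max_left _ _
  unfold lp
  rw [max_eq_right (one_le_pow₀ h1), Real.log_pow]

lemma eval_bound (p : Polynomial ℂ) (D : ℕ) (hD : p.natDegree ≤ D) (w : ℂ) :
    ‖p.eval w‖ ≤
      (∑ i ∈ Finset.range (D + 1), ‖p.coeff i‖) * (max 1 (‖w‖)) ^ D := by
  have hM : (1:ℝ) ≤ max 1 (‖w‖) := le_max_left _ _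
  rw [Polynomial.eval_eq_sum_range' (lt_of_le_of_lt hD (Nat.lt_succ_self D))]
  refine le_trans (norm_sum_le _ _) ?_
  rw [Finset.sum_mul]
  refine Finset.sum_le_sum fun i hi => ?_
  rw [norm_mul, norm_pow]
  apply mul_le_mul_of_nonneg_left _ (norm_nonneg _)
  calc ‖w‖ ^ i ≤ (max 1 (‖w‖)) ^ i :=
        pow_le_pow_left₀ (norm_nonneg _) (le_max_right _ _) i
    _ ≤ (max 1 (‖w‖)) ^ D :=
        pow_le_pow_right₀ hM (Nat.lt_succ_iff.mp (Finset.mem_range.mp hi))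

lemma polyIter_eval_succ (f : Polynomial ℂ) (n : ℕ) (z : ℂ) :
    (polyIter f (n + 1)).eval z = f.eval ((polyIter f n).eval z) := by
  simp [polyIter, Polynomial.eval_comp]

lemma polyIter_eval_succ' (f : Polynomial ℂ) (n : ℕ) (z : ℂ) :
    (polyIter f (n + 1)).eval z = (polyIter f n).eval (f.eval z) := by
  induction n with
  | zero => simp [polyIter, Polynomial.eval_comp]
  | succ n ih => rw [polyIter_eval_succ f (n + 1) z, ih, ← polyIter_eval_succ]

lemma deriv_iter_succ (f : Polynomial ℂ) (n : ℕ) :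
    Polynomial.derivative (polyIter f (n + 1)) =
      Polynomial.derivative (polyIter f n) *
        (Polynomial.derivative f).comp (polyIter f n) := by
  rw [show polyIter f (n + 1) = f.comp (polyIter f n) from rfl, Polynomial.derivative_comp]

end Stmt5Aux

open Stmt5Aux

set_option maxHeartbeats 1000000 in
theorem stmt5 (f : Polynomial ℂ) (d : ℕ) (hd : 1 < d) (hdeg : f.natDegree = d)
    (g : ℂ → ℝ)
    (hg : ∀ z : ℂ, Tendsto
      (fun n : ℕ => Real.log (max 1 (‖(polyIter f n).eval z‖)) / (d : ℝ) ^ n)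
      atTop (nhds (g z))) :
    ∃ C : ℝ, 0 < C ∧ ∀ n : ℕ, 1 ≤ n → ∀ z : ℂ,
      Real.log (max 1 (‖(Polynomial.derivative (polyIter f n)).eval z‖)) ≤
        ((d : ℝ) ^ n - 1) * g z + C * n := by
  have hd1 : (1:ℝ) < (d:ℝ) := by exact_mod_cast hd
  have hdpos : (0:ℝ) < (d:ℝ) := lt_trans one_pos hd1
  have hfne : f ≠ 0 := by
    intro h
    rw [h, Polynomial.natDegree_zero] at hdeg
    omega
  set L : ℝ := ‖f.leadingCoeff‖ with hLdef
  have hL : 0 < L := norm_pos_iff.mpr (Polynomial.leadingCoeff_ne_zero.mpr hfne)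
  set B : ℝ := ∑ i ∈ Finset.range d, ‖f.eraseLead.coeff i‖ with hBdef
  have hB0 : 0 ≤ B := Finset.sum_nonneg fun i _ => norm_nonneg _
  have hB : ∀ w : ℂ,
      ‖f.eraseLead.eval w‖ ≤ B * (max 1 (‖w‖)) ^ (d - 1) := by
    intro w
    have h := eval_bound f.eraseLead (d - 1)
      (le_trans f.eraseLead_natDegree_le (by omega)) w
    rwa [show d - 1 + 1 = d by omega] at h
  set R : ℝ := max 1 (max (2 * B / L) (2 / L)) with hRdef
  have hR1 : (1:ℝ) ≤ R := le_max_left _ _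
  -- lower bound on |f(w)| for |w| ≥ R
  have key : ∀ w : ℂ, R ≤ ‖w‖ →
      (L / 2) * ‖w‖ ^ d ≤ ‖f.eval w‖ ∧
        (1:ℝ) ≤ ‖f.eval w‖ := by
    intro w hw
    set x : ℝ := ‖w‖ with hxdef
    have hx1 : (1:ℝ) ≤ x := le_trans hR1 hw
    have hx2 : 2 * B / L ≤ x := le_trans (le_trans (le_max_left _ _) (le_max_right _ _)) hw
    have hx3 : 2 / L ≤ x := le_trans (le_trans (le_max_right _ _) (le_max_right _ _)) hw
    have hsplit : f.eval w = f.leadingCoeff * w ^ d + f.eraseLead.eval w := by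
      conv_lhs => rw [← f.eraseLead_add_C_mul_X_pow]
      rw [hdeg]
      simp
      ring
    have htri : L * x ^ d - ‖f.eraseLead.eval w‖ ≤ ‖f.eval w‖ := by
      have h0 := norm_sub_norm_le (f.leadingCoeff * w ^ d) (-(f.eraseLead.eval w))
      simp only [norm_neg, sub_neg_eq_add] at h0
      rw [norm_mul, norm_pow] at h0
      rw [hsplit]
      exact h0
    have herase : ‖f.eraseLead.eval w‖ ≤ B * x ^ (d - 1) := by
      have h := hB w
      rwa [max_eq_right hx1] at h
    have hxd : x ^ d = x * x ^ (d - 1) := by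
      conv_lhs => rw [show d = (d - 1) + 1 by omega]
      rw [pow_succ]
      ring
    have hxp : (0:ℝ) ≤ x ^ (d - 1) := pow_nonneg (by linarith) _
    have hBx : B * x ^ (d - 1) ≤ (L / 2) * x ^ d := by
      rw [hxd]
      have : 2 * B ≤ L * x := by
        rw [div_le_iff₀ hL] at hx2
        linarith
      nlinarith
    have h1 : (L / 2) * x ^ d ≤ ‖f.eval w‖ := by linarith
    refine ⟨h1, ?_⟩
    have hxd' : x ≤ x ^ d := le_self_pow₀ hx1 (by omega)
    have e1 : (L / 2) * (2 / L) = 1 := by field_simp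
    have e2 : (L / 2) * (2 / L) ≤ (L / 2) * x := mul_le_mul_of_nonneg_left hx3 (by linarith)
    have e3 : (L / 2) * x ≤ (L / 2) * x ^ d := mul_le_mul_of_nonneg_left hxd' (by linarith)
    linarith
  set A : ℝ := d * Real.log R + |Real.log (L / 2)| with hAdef
  have hlogR : 0 ≤ Real.log R := Real.log_nonneg hR1
  have hA0 : 0 ≤ A := by positivity
  -- the key lower estimate d·log⁺|w| ≤ log⁺|f(w)| + A
  have h2 : ∀ w : ℂ, (d:ℝ) * lp (‖w‖) ≤ lp (‖f.eval w‖) + A := by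
    intro w
    rcases le_or_gt R (‖w‖) with hw | hw
    · obtain ⟨hk1, hk2⟩ := key w hw
      have hx1 : (1:ℝ) ≤ ‖w‖ := le_trans hR1 hw
      have hx0 : (0:ℝ) < ‖w‖ := by linarith
      have hlpw : lp (‖w‖) = Real.log (‖w‖) := by
        rw [lp_def, max_eq_right hx1]
      have hlpf : lp (‖f.eval w‖) = Real.log (‖f.eval w‖) := by
        rw [lp_def, max_eq_right hk2]
      have hlog : Real.log (L / 2) + (d:ℝ) * Real.log (‖w‖) ≤
          Real.log (‖f.eval w‖) := by
        have h := Real.log_le_log (by positivity) hk1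
        rwa [Real.log_mul (by positivity) (by positivity), Real.log_pow] at h
      have habs := neg_abs_le (Real.log (L / 2))
      have hdR : 0 ≤ (d:ℝ) * Real.log R := mul_nonneg hdpos.le hlogR
      rw [hlpw, hlpf, hAdef]
      linarith
    · have h1 : lp (‖w‖) ≤ Real.log R := by
        rw [lp_def]
        exact Real.log_le_log (lt_of_lt_of_le one_pos (le_max_left _ _))
          (max_le hR1 hw.le)
      have h1' : (d:ℝ) * lp (‖w‖) ≤ (d:ℝ) * Real.log R :=
        mul_le_mul_of_nonneg_left h1 hdpos.le
      have h2' := lp_nonneg (‖f.eval w‖)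
      have h3' := abs_nonneg (Real.log (L / 2))
      rw [hAdef]
      linarith
  have hd0 : (d:ℝ) ≠ 0 := ne_of_gt hdpos
  set C1 : ℝ := A / ((d:ℝ) - 1) with hC1def
  have hC10 : 0 ≤ C1 := div_nonneg hA0 (by linarith)
  -- log⁺|z| ≤ g(z) + C1
  have h3 : ∀ z : ℂ, lp (‖z‖) ≤ g z + C1 := by
    intro z
    have hstep : ∀ n : ℕ,
        Real.log (max 1 (‖(polyIter f n).eval z‖)) / (d:ℝ) ^ n ≤
          Real.log (max 1 (‖(polyIter f (n+1)).eval z‖)) / (d:ℝ) ^ (n+1) +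
            A / (d:ℝ) ^ (n+1) := by
      intro n
      have hD : (0:ℝ) < (d:ℝ) ^ (n+1) := pow_pos hdpos _
      have h := h2 ((polyIter f n).eval z)
      rw [← polyIter_eval_succ] at h
      rw [← lp_def, ← lp_def]
      rw [← add_div, div_le_div_iff₀ (pow_pos hdpos n) hD, pow_succ]
      have hpn : (0:ℝ) < (d:ℝ) ^ n := pow_pos hdpos n
      calc lp (‖(polyIter f n).eval z‖) * ((d:ℝ) ^ n * d)
          = ((d:ℝ) * lp (‖(polyIter f n).eval z‖)) * (d:ℝ) ^ n := by ring
        _ ≤ (lp (‖(polyIter f (n+1)).eval z‖) + A) * (d:ℝ) ^ n :=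
            mul_le_mul_of_nonneg_right h hpn.le
    have hclaim : ∀ n : ℕ,
        Real.log (max 1 (‖(polyIter f 0).eval z‖)) / (d:ℝ) ^ 0 ≤
          Real.log (max 1 (‖(polyIter f n).eval z‖)) / (d:ℝ) ^ n +
            ∑ k ∈ Finset.range n, A / (d:ℝ) ^ (k+1) := by
      intro n
      induction n with
      | zero => simp
      | succ n ih =>
        rw [Finset.sum_range_succ]
        linarith [hstep n]
    have hsumle : ∀ n : ℕ, ∑ k ∈ Finset.range n, A / (d:ℝ) ^ (k+1) ≤ C1 := by
      intro n
      have hr1 : (1:ℝ) / d < 1 := by rw [div_lt_one hdpos]; exact hd1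
      have hr0 : (0:ℝ) ≤ 1 / d := by positivity
      have hsum : ∑ k ∈ Finset.range n, (1 / (d:ℝ)) ^ k ≤ 1 / (1 - 1 / d) := by
        rw [geom_sum_eq (ne_of_lt hr1)]
        have h4 : ((1 / (d:ℝ)) ^ n - 1) / (1 / (d:ℝ) - 1) = (1 - (1 / d) ^ n) / (1 - 1 / d) := by
          rw [← neg_div_neg_eq]; ring_nf
        rw [h4]
        exact div_le_div₀ zero_le_one (by nlinarith [pow_nonneg hr0 n]) (by linarith) le_rfl
      calc ∑ k ∈ Finset.range n, A / (d:ℝ) ^ (k+1)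
          = (A / d) * ∑ k ∈ Finset.range n, (1 / (d:ℝ)) ^ k := by
            rw [Finset.mul_sum]
            refine Finset.sum_congr rfl fun k _ => ?_
            rw [pow_succ', ← div_div, div_eq_mul_inv (A / (d:ℝ)) ((d:ℝ) ^ k), one_div,
              inv_pow]
        _ ≤ (A / d) * (1 / (1 - 1 / d)) := mul_le_mul_of_nonneg_left hsum (by positivity)
        _ = C1 := by
            rw [hC1def]
            have h5 : (1:ℝ) - 1 / d = (d - 1) / d := by field_simp
            rw [h5]
            have hdm : (d:ℝ) - 1 ≠ 0 := by
              intro h; apply hd1.ne'; linarith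
            field_simp
    have hge : ∀ n : ℕ, lp (‖z‖) - C1 ≤
        Real.log (max 1 (‖(polyIter f n).eval z‖)) / (d:ℝ) ^ n := by
      intro n
      have h0 : Real.log (max 1 (‖(polyIter f 0).eval z‖)) / (d:ℝ) ^ 0 =
          lp (‖z‖) := by
        simp [polyIter, lp_def]
      linarith [hclaim n, hsumle n]
    have := ge_of_tendsto' (hg z) hge
    linarith
  have h6 : ∀ z : ℂ, 0 ≤ g z := fun z =>
    ge_of_tendsto' (hg z) fun n =>
      div_nonneg (Real.log_nonneg (le_max_left _ _)) (pow_nonneg hdpos.le n)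
  -- functional equation g(f(z)) = d·g(z)
  have h4 : ∀ z : ℂ, g (f.eval z) = (d:ℝ) * g z := by
    intro z
    have t1 : Tendsto (fun n : ℕ =>
        Real.log (max 1 (‖(polyIter f (n+1)).eval z‖)) / (d:ℝ) ^ n)
        atTop (nhds (g (f.eval z))) := by
      refine (hg (f.eval z)).congr fun n => ?_
      rw [polyIter_eval_succ']
    have t2 : Tendsto (fun n : ℕ =>
        Real.log (max 1 (‖(polyIter f (n+1)).eval z‖)) / (d:ℝ) ^ (n+1))
        atTop (nhds (g z)) := (hg z).comp (tendsto_add_atTop_nat 1)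
    have t3 := t2.const_mul (d:ℝ)
    have t3' : Tendsto (fun n : ℕ =>
        Real.log (max 1 (‖(polyIter f (n+1)).eval z‖)) / (d:ℝ) ^ n)
        atTop (nhds ((d:ℝ) * g z)) := by
      refine t3.congr fun n => ?_
      have hpn : ((d:ℝ) ^ (n+1)) ≠ 0 := ne_of_gt (pow_pos hdpos _)
      rw [pow_succ] at hpn ⊢
      field_simp
    exact tendsto_nhds_unique t1 t3'
  have h5 : ∀ (k : ℕ) (z : ℂ), g ((polyIter f k).eval z) = (d:ℝ) ^ k * g z := by
    intro k
    induction k with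
    | zero => intro z; simp [polyIter]
    | succ k ih =>
      intro z
      rw [polyIter_eval_succ, h4 ((polyIter f k).eval z), ih z, pow_succ]
      ring
  -- the derivative coefficient bound
  set B2 : ℝ := ∑ i ∈ Finset.range d, ‖(Polynomial.derivative f).coeff i‖
    with hB2def
  have hB20 : 0 ≤ B2 := Finset.sum_nonneg fun i _ => norm_nonneg _
  set C0 : ℝ := lp B2 with hC0def
  have hC00 : 0 ≤ C0 := lp_nonneg _
  have h1 : ∀ w : ℂ, lp (‖(Polynomial.derivative f).eval w‖) ≤
      ((d:ℝ) - 1) * lp (‖w‖) + C0 := by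
    intro w
    have hDle : (Polynomial.derivative f).natDegree ≤ d - 1 := by
      rw [← hdeg]; exact Polynomial.natDegree_derivative_le f
    have hb := eval_bound (Polynomial.derivative f) (d - 1) hDle w
    rw [show d - 1 + 1 = d by omega] at hb
    have h1' := lp_mono hb
    have h2' := lp_mul (x := B2) (y := (max 1 (‖w‖)) ^ (d - 1)) hB20
      (by positivity)
    have h3' := lp_pow_max w (d - 1)
    have hcast : ((d - 1 : ℕ) : ℝ) = (d:ℝ) - 1 := by
      rw [Nat.cast_sub (by omega)]; norm_num
    rw [hcast] at h3'
    rw [hC0def]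
    linarith
  set Cs : ℝ := ((d:ℝ) - 1) * C1 + C0 with hCsdef
  have hCs0 : 0 ≤ Cs := add_nonneg (mul_nonneg (by linarith) hC10) hC00
  -- the main inductive estimate
  have main : ∀ (n : ℕ) (z : ℂ),
      lp (‖(Polynomial.derivative (polyIter f n)).eval z‖) ≤
        ((d:ℝ) ^ n - 1) * g z + Cs * n := by
    intro n
    induction n with
    | zero =>
      intro z
      simp [polyIter, Polynomial.derivative_X, lp_def]
    | succ n ih =>
      intro z
      rw [deriv_iter_succ, Polynomial.eval_mul, Polynomial.eval_comp]
      have step1 := lp_abs_mul ((Polynomial.derivative (polyIter f n)).eval z)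
        ((Polynomial.derivative f).eval ((polyIter f n).eval z))
      have step2 := h1 ((polyIter f n).eval z)
      have step3 : lp (‖(polyIter f n).eval z‖) ≤ (d:ℝ) ^ n * g z + C1 := by
        have h := h3 ((polyIter f n).eval z)
        rwa [h5 n z] at h
      have step4 : ((d:ℝ) - 1) * lp (‖(polyIter f n).eval z‖) ≤
          ((d:ℝ) - 1) * ((d:ℝ) ^ n * g z + C1) :=
        mul_le_mul_of_nonneg_left step3 (by linarith)
      have ihz := ih z
      have hexp : ((d:ℝ) ^ n - 1) * g z + Cs * n +
          (((d:ℝ) - 1) * ((d:ℝ) ^ n * g z + C1) + C0) =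
          ((d:ℝ) ^ (n+1) - 1) * g z + Cs * (n+1) := by
        rw [hCsdef]
        push_cast
        ring
      push_cast
      push_cast at hexp
      linarith
  refine ⟨Cs + 1, by linarith, fun n hn z => ?_⟩
  have hm := main n z
  rw [lp_def] at hm
  have hn' : (1:ℝ) ≤ (n:ℝ) := by exact_mod_cast hn
  nlinarith [hm, hCs0, hn']
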